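/- arXiv:2208.09353 — 2 statements merged into one kernel-verified Lean document; each statement's English description precedes it below -/
import Mathlib

section
/- Let N and H be groups, φ : H → Aut(N) a homomorphism, and G = N ⋊ H the semidirect product. Assume that N is torsion-free and that for every finite subgroup Ψ ⊆ H, every 1-cocycle Ψ → N (for the action through φ) is principal. Then every finite subgroup of G is conjugate in G, by an element of N, to a subgroup of H = {(1, h) : h ∈ H}. -/
/-- A monoid is torsion-free if its only element of finite order is the identity
(the definition `Monoid.IsTorsionFree` of the older Mathlib, since removed). -/
def Monoid.IsTorsionFree (G : Type*) [Monoid G] : Prop :=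
  ∀ g : G, g ≠ 1 → ¬IsOfFinOrder g

/-- Let `N`, `H` be groups, `φ : H → Aut N` a homomorphism, and
`G = N ⋊[φ] H`. Assume `N` is torsion-free and that for every finite subgroup `Ψ ≤ H`,
every 1-cocycle `Ψ → N` (for the action through `φ`) is principal. Then every finite
subgroup of `G` is conjugate in `G`, by an element of `N`, to a subgroup of
`H = {(1, h)}`. -/
theorem stmt5 {N H : Type*} [Group N] [Group H] (φ : H →* MulAut N)
    (htf : Monoid.IsTorsionFree N)
    (hcoc : ∀ Ψ : Subgroup H, Finite Ψ →
      ∀ ξ : Ψ → N, (∀ δ₁ δ₂ : Ψ, ξ (δ₁ * δ₂) = ξ δ₁ * φ (δ₁ : H) (ξ δ₂)) →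
        ∃ n : N, ∀ δ : Ψ, ξ δ = n⁻¹ * φ (δ : H) n)
    (Γ : Subgroup (N ⋊[φ] H)) (hΓ : Finite Γ) :
    ∃ n : N, ∀ x ∈ Γ,
      SemidirectProduct.inl n * x * (SemidirectProduct.inl n)⁻¹ ∈
        (SemidirectProduct.inr : H →* N ⋊[φ] H).range := by
  classical
  -- The projection to H is injective on Γ.
  have key : ∀ x ∈ Γ, x.right = 1 → x = 1 := by
    intro x hx hr
    have hfo : IsOfFinOrder x := by
      have h1 : IsOfFinOrder (⟨x, hx⟩ : Γ) := isOfFinOrder_of_finite _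
      obtain ⟨k, hk, hpow⟩ := isOfFinOrder_iff_pow_eq_one.mp h1
      refine isOfFinOrder_iff_pow_eq_one.mpr ⟨k, hk, ?_⟩
      have := congrArg (Subgroup.subtype Γ) hpow
      simpa using this
    have hx1 : x = SemidirectProduct.inl x.left := by
      ext <;> simp [hr]
    have hfol : IsOfFinOrder x.left := by
      rw [isOfFinOrder_iff_pow_eq_one] at hfo ⊢
      obtain ⟨k, hk, hpow⟩ := hfo
      refine ⟨k, hk, ?_⟩
      rw [hx1, ← map_pow] at hpow
      exact SemidirectProduct.inl_injective (by simpa using hpow)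
    have hl : x.left = 1 := by
      by_contra hne
      exact htf x.left hne hfol
    rw [hx1, hl, map_one]
  have uniq : ∀ x ∈ Γ, ∀ y ∈ Γ, x.right = y.right → x = y := by
    intro x hx y hy hr
    have hm : x * y⁻¹ ∈ Γ := mul_mem hx (inv_mem hy)
    have hrr : (x * y⁻¹).right = 1 := by
      simp [hr]
    have := key _ hm hrr
    exact mul_inv_eq_one.mp this
  -- The image of Γ in H.
  set Ψ : Subgroup H := Γ.map SemidirectProduct.rightHom with hΨ
  have hΨfin : Finite Ψ := by
    have hs : Function.Surjective
        (fun x : Γ => (⟨SemidirectProduct.rightHom (x : N ⋊[φ] H),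
          Subgroup.mem_map.mpr ⟨x, x.2, rfl⟩⟩ : Ψ)) := by
      rintro ⟨h, hh⟩
      obtain ⟨x, hx, hx'⟩ := Subgroup.mem_map.mp hh
      exact ⟨⟨x, hx⟩, by simpa using hx'⟩
    exact Finite.of_surjective _ hs
  -- lift: for each δ : Ψ, a chosen element of Γ above it.
  have lift : ∀ δ : Ψ, ∃ x, x ∈ Γ ∧ x.right = (δ : H) := by
    rintro ⟨h, hh⟩
    obtain ⟨x, hx, hx'⟩ := Subgroup.mem_map.mp hh
    exact ⟨x, hx, hx'⟩
  choose σ hσΓ hσr using lift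
  set ξ : Ψ → N := fun δ => (σ δ).left with hξ
  have hcocycle : ∀ δ₁ δ₂ : Ψ, ξ (δ₁ * δ₂) = ξ δ₁ * φ (δ₁ : H) (ξ δ₂) := by
    intro δ₁ δ₂
    have hmem : σ δ₁ * σ δ₂ ∈ Γ := mul_mem (hσΓ δ₁) (hσΓ δ₂)
    have hr : (σ (δ₁ * δ₂)).right = (σ δ₁ * σ δ₂).right := by
      simp [hσr]
    have heq := uniq _ (hσΓ (δ₁ * δ₂)) _ hmem hr
    have hleft := congrArg SemidirectProduct.left heq
    simpa [hσr] using hleft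
  obtain ⟨n, hn⟩ := hcoc Ψ hΨfin ξ hcocycle
  refine ⟨n, fun x hx => ?_⟩
  have hδmem : x.right ∈ Ψ := Subgroup.mem_map.mpr ⟨x, hx, rfl⟩
  set δ : Ψ := ⟨x.right, hδmem⟩ with hδ
  have hxσ : σ δ = x := uniq _ (hσΓ δ) _ hx (hσr δ)
  have hxl : x.left = n⁻¹ * φ x.right n := by
    have := hn δ
    rw [hξ] at this
    simpa [hxσ] using this
  refine ⟨x.right, ?_⟩
  ext
  · simp [hxl]
  · simp
end

section
/- Let k be a field of characteristic 0, let V be a vector space over k, and let H be a group acting on the additive group of V by additive group automorphisms; form the semidirect product G = V ⋊ H (with V written as a multiplicative group via this identification). Then every finite subgroup of G is conjugate in G, by an element of V, to a subgroup of H = {(0, h) : h ∈ H}. -/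
/-- Reinterpret an action of `H` on the additive group of `V` by additive
automorphisms as an action on `Multiplicative V` by multiplicative automorphisms. -/
def addAutHomToMulAut {V : Type*} [AddCommGroup V] {H : Type*} [Group H]
    (ρ : H →* Multiplicative (AddAut V)) : H →* MulAut (Multiplicative V) where
  toFun h := AddEquiv.toMultiplicative (Multiplicative.toAdd (ρ h))
  map_one' := by
    show AddEquiv.toMultiplicative (Multiplicative.toAdd (ρ 1)) = 1
    rw [map_one]; ext x; rfl
  map_mul' h₁ h₂ := by
    show AddEquiv.toMultiplicative (Multiplicative.toAdd (ρ (h₁ * h₂))) =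
      AddEquiv.toMultiplicative (Multiplicative.toAdd (ρ h₁)) *
        AddEquiv.toMultiplicative (Multiplicative.toAdd (ρ h₂))
    rw [map_mul]; ext x; rfl

/-- Let `k` be a field of characteristic `0`, `V` a `k`-vector space,
and `H` a group acting on the additive group of `V` by additive automorphisms; form the
semidirect product `G = V ⋊ H` (writing `V` multiplicatively). Then every finite
subgroup of `G` is conjugate in `G`, by an element of `V`, to a subgroup of
`H = {(0, h)}`. -/
theorem stmt6 {k : Type*} [Field k] [CharZero k] {V : Type*} [AddCommGroup V] [Module k V]
    {H : Type*} [Group H] (ρ : H →* Multiplicative (AddAut V))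
    (Γ : Subgroup (Multiplicative V ⋊[addAutHomToMulAut ρ] H)) (hΓ : Finite Γ) :
    ∃ v : V, ∀ x ∈ Γ,
      SemidirectProduct.inl (Multiplicative.ofAdd v) * x *
          (SemidirectProduct.inl (Multiplicative.ofAdd v))⁻¹ ∈
        (SemidirectProduct.inr : H →* Multiplicative V ⋊[addAutHomToMulAut ρ] H).range := by
  classical
  have : Fintype Γ := Fintype.ofFinite Γ
  set n := Nat.card Γ with hn
  have hn0 : (n : k) ≠ 0 := Nat.cast_ne_zero.mpr (Nat.card_pos (α := Γ)).ne'
  set S : V := ∑ γ : Γ, Multiplicative.toAdd (γ.1).left with hS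
  -- additive automorphisms commute with the scalar `(n : k)⁻¹`
  have hcomm : ∀ h : H, (Multiplicative.toAdd (ρ h)) ((n : k)⁻¹ • S) = (n : k)⁻¹ • (Multiplicative.toAdd (ρ h)) S := by
    intro h
    apply smul_right_injective V hn0 (r := (n : k))
    show (n : k) • (Multiplicative.toAdd (ρ h)) ((n : k)⁻¹ • S) = (n : k) • ((n : k)⁻¹ • (Multiplicative.toAdd (ρ h)) S)
    rw [smul_inv_smul₀ hn0, Nat.cast_smul_eq_nsmul, ← map_nsmul,
      ← Nat.cast_smul_eq_nsmul k n ((n : k)⁻¹ • S), smul_inv_smul₀ hn0]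
  refine ⟨-((n : k)⁻¹ • S), fun x hx => ?_⟩
  -- the cocycle identity averaged over Γ
  have key : n • Multiplicative.toAdd x.left + (Multiplicative.toAdd (ρ x.right)) S = S := by
    have hsum : ∑ γ : Γ, Multiplicative.toAdd (((⟨x, hx⟩ : Γ) * γ : Γ)).1.left = S :=
      Fintype.sum_bijective (fun γ : Γ => (⟨x, hx⟩ : Γ) * γ)
        (Group.mulLeft_bijective _)
        (fun γ : Γ => Multiplicative.toAdd (((⟨x, hx⟩ : Γ) * γ : Γ)).1.left)
        (fun γ : Γ => Multiplicative.toAdd (γ.1).left)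
        (fun γ => rfl)
    have hterm : ∀ γ : Γ, Multiplicative.toAdd (((⟨x, hx⟩ : Γ) * γ : Γ)).1.left
        = Multiplicative.toAdd x.left + (Multiplicative.toAdd (ρ x.right)) (Multiplicative.toAdd (γ.1).left) := by
      intro γ
      rfl
    calc n • Multiplicative.toAdd x.left + (Multiplicative.toAdd (ρ x.right)) S
        = ∑ γ : Γ, (Multiplicative.toAdd x.left
            + (Multiplicative.toAdd (ρ x.right)) (Multiplicative.toAdd (γ.1).left)) := by
          rw [Finset.sum_add_distrib, Finset.sum_const, Finset.card_univ, hS,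
            map_sum (Multiplicative.toAdd (ρ x.right)) (fun γ : Γ => Multiplicative.toAdd (γ.1).left) Finset.univ]
          simp [hn, Nat.card_eq_fintype_card]
      _ = ∑ γ : Γ, Multiplicative.toAdd (((⟨x, hx⟩ : Γ) * γ : Γ)).1.left :=
          Finset.sum_congr rfl fun γ _ => (hterm γ).symm
      _ = S := hsum
  -- identify the leftover left component
  have hsub : n • Multiplicative.toAdd x.left = S - (Multiplicative.toAdd (ρ x.right)) S := eq_sub_of_add_eq key
  have hw : Multiplicative.toAdd x.left
      = (Multiplicative.toAdd (ρ x.right)) (-((n : k)⁻¹ • S)) - (-((n : k)⁻¹ • S)) := by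
    have h1 : (Multiplicative.toAdd (ρ x.right)) (-((n : k)⁻¹ • S)) - (-((n : k)⁻¹ • S))
        = (n : k)⁻¹ • (S - (Multiplicative.toAdd (ρ x.right)) S) := by
      rw [map_neg, hcomm, smul_sub]; abel
    rw [h1, ← hsub, ← Nat.cast_smul_eq_nsmul k n, inv_smul_smul₀ hn0]
  refine ⟨x.right, ?_⟩
  have hφ : ∀ (h : H) (m : Multiplicative V),
      Multiplicative.toAdd ((addAutHomToMulAut ρ h) m) = (Multiplicative.toAdd (ρ h)) (Multiplicative.toAdd m) :=
    fun _ _ => rfl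
  refine SemidirectProduct.ext ?_ ?_
  · simp only [SemidirectProduct.left_inr, SemidirectProduct.mul_left,
      SemidirectProduct.left_inl, SemidirectProduct.right_inl, SemidirectProduct.mul_right,
      SemidirectProduct.inv_left, SemidirectProduct.inv_right, map_one, inv_one, mul_one,
      one_mul, MulAut.one_apply]
    apply Multiplicative.toAdd.injective
    simp only [toAdd_one, toAdd_mul, hφ, toAdd_inv, toAdd_ofAdd, map_neg, map_inv]
    rw [hw, map_neg]; abel
  · simp only [SemidirectProduct.right_inr, SemidirectProduct.mul_right,
      SemidirectProduct.right_inl, SemidirectProduct.inv_right, inv_one, mul_one, one_mul]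
end
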